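/- Let {u_k} ⊂ ℝ^{dn} with ‖u_k‖ → ∞ and u_k/‖u_k‖ → ũ, and let ∇ be a linear forward-difference operator acting grid-edge-wise. Then for any ρ > 0 there exists k₀ such that ‖∇(u_k − ρũ)‖₀ ≤ ‖∇u_k‖₀ for all k ≥ k₀, where ‖·‖₀ is the grouped ℓ⁰ semi-norm summing over grid edges. -/
import Mathlib


open Filter Topology

/-- Grouped ℓ⁰ semi-norm summing over grid edges. -/
noncomputable def l0 {m d : ℕ} (w : Fin m → Fin d → ℝ) : ℝ :=
  Set.ncard {e : Fin m | w e ≠ 0}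

theorem stmt3 {ng me d : ℕ}
    (src tgt : Fin me → Fin ng)
    (D : (Fin ng → Fin d → ℝ) →ₗ[ℝ] (Fin me → Fin d → ℝ))
    (hD : ∀ (u : Fin ng → Fin d → ℝ) (e : Fin me), D u e = u (tgt e) - u (src e))
    (u : ℕ → (Fin ng → Fin d → ℝ)) (utld : Fin ng → Fin d → ℝ)
    (hnorm : Tendsto (fun k => ‖u k‖) atTop atTop)
    (hdir : Tendsto (fun k => (‖u k‖)⁻¹ • u k) atTop (nhds utld))
    (ρ : ℝ) (hρ : 0 < ρ) :
    ∃ k₀ : ℕ, ∀ k ≥ k₀, l0 (D (u k - ρ • utld)) ≤ l0 (D (u k)) := by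
  have hDc : Continuous (D : (Fin ng → Fin d → ℝ) → (Fin me → Fin d → ℝ)) :=
    LinearMap.continuous_of_finiteDimensional D
  have hDu : Tendsto (fun k => D ((‖u k‖)⁻¹ • u k)) atTop (nhds (D utld)) :=
    (hDc.tendsto utld).comp hdir
  -- for each edge e with D utld e ≠ 0, eventually D (u k) e ≠ 0
  have key : ∀ᶠ k in atTop, ∀ e : Fin me, D utld e ≠ 0 → D (u k) e ≠ 0 := by
    rw [eventually_all]
    intro e
    by_cases h : D utld e ≠ 0
    · have hev : Tendsto (fun k => D ((‖u k‖)⁻¹ • u k) e) atTop (nhds (D utld e)) :=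
        ((continuous_apply e).tendsto _).comp hDu
      have hne : ∀ᶠ k in atTop, D ((‖u k‖)⁻¹ • u k) e ≠ 0 := by
        have : {x : Fin d → ℝ | x ≠ 0} ∈ nhds (D utld e) :=
          (isOpen_ne_fun (by continuity) continuous_const).mem_nhds h
        exact hev.eventually_mem this
      filter_upwards [hne] with k hk _
      intro h0
      apply hk
      rw [map_smul]
      simp [h0]
    · filter_upwards with k hk; exact absurd hk h
  rcases eventually_atTop.mp key with ⟨k₀, hk₀⟩
  refine ⟨k₀, fun k hk => ?_⟩
  have hsub : {e : Fin me | D (u k - ρ • utld) e ≠ 0} ⊆ {e : Fin me | D (u k) e ≠ 0} := by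
    intro e he
    simp only [Set.mem_setOf_eq] at he ⊢
    intro h0
    apply he
    have hu : D utld e = 0 := by
      by_contra h
      exact hk₀ k hk e h h0
    rw [map_sub, map_smul]
    simp [h0, hu]
  unfold l0
  exact_mod_cast Set.ncard_le_ncard hsub (Set.toFinite _)
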